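/- Let λ > 1, I = (−1,1), and I_λ = (−λ,λ). For every polynomial g of degree at most p, one has ∫_{I_λ \ [−1,1]} g(t)² dt ≤ (1/2)[(λ + √(λ²−1))^{2p+1} − 1] · ∫_{−1}^{1} g(t)² dt. -/

import Mathlib

open Polynomial Finset intervalIntegral


noncomputable def Leg (n : ℕ) : Polynomial ℝ :=
  Polynomial.C (((2:ℝ)^n * n.factorial)⁻¹) * Polynomial.derivative^[n] ((Polynomial.X^2 - 1)^n)

lemma W_eq (n : ℕ) : ((X:ℝ[X])^2 - 1)^n = (X - C 1)^n * (X + C 1)^n := by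
  rw [← mul_pow]; ring_nf; rw [Polynomial.C_1]; ring_nf

lemma coeff_id {n k : ℕ} (hk' : k ≤ n) :
    n.choose k * n.descFactorial (n - k) * n.descFactorial k = n.factorial * n.choose k ^ 2 := by
  rw [Nat.descFactorial_eq_factorial_mul_choose, Nat.descFactorial_eq_factorial_mul_choose,
    Nat.choose_symm hk']
  have := Nat.choose_mul_factorial_mul_factorial hk'
  calc n.choose k * ((n - k).factorial * n.choose k) * (k.factorial * n.choose k)
      = (n.choose k * k.factorial * (n-k).factorial) * (n.choose k)^2 := by ring
    _ = n.factorial * (n.choose k)^2 := by rw [this]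

lemma legD_eq (n : ℕ) : Polynomial.derivative^[n] (((X:ℝ[X])^2 - 1)^n) =
    ∑ k ∈ range (n+1), (n.factorial * (n.choose k)^2) • ((X - C 1)^k * (X + C 1)^(n-k)) := by
  rw [W_eq, Polynomial.iterate_derivative_mul]
  refine Finset.sum_congr rfl fun k hk => ?_
  have hk' : k ≤ n := Nat.lt_succ_iff.mp (Finset.mem_range.mp hk)
  rw [Polynomial.iterate_derivative_X_sub_pow, Polynomial.iterate_derivative_X_add_pow]
  rw [smul_mul_assoc, mul_smul_comm, smul_smul, smul_smul, Nat.sub_sub_self hk']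
  rw [coeff_id hk']

lemma leg_eval (n : ℕ) (t : ℝ) : (Leg n).eval t =
    ∑ k ∈ range (n+1), (n.choose k : ℝ)^2 * (((t-1)/2)^k * ((t+1)/2)^(n-k)) := by
  rw [Leg, legD_eq]
  rw [Polynomial.eval_mul, Polynomial.eval_C, Polynomial.eval_finset_sum]
  rw [Finset.mul_sum]
  refine Finset.sum_congr rfl fun k hk => ?_
  have hk' : k ≤ n := Nat.lt_succ_iff.mp (Finset.mem_range.mp hk)
  rw [Polynomial.eval_smul]
  simp only [Polynomial.eval_mul, Polynomial.eval_pow, Polynomial.eval_sub, Polynomial.eval_add,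
    Polynomial.eval_X, Polynomial.eval_C, nsmul_eq_mul]
  push_cast
  have h2 : (2:ℝ)^n = 2^k * 2^(n-k) := by rw [← pow_add, Nat.add_sub_cancel' hk']
  have hf : (n.factorial : ℝ) ≠ 0 := Nat.cast_ne_zero.mpr n.factorial_ne_zero
  have h2k : (2:ℝ)^k ≠ 0 := by positivity
  have h2nk : (2:ℝ)^(n-k) ≠ 0 := by positivity
  rw [div_pow, div_pow, h2]
  field_simp

lemma W_monic (n : ℕ) : (((X:ℝ[X])^2 - 1)^n).Monic := by
  have h : ((X:ℝ[X])^2 - 1) = X^2 - C 1 := by rw [Polynomial.C_1]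
  rw [h]
  exact (Polynomial.monic_X_pow_sub_C 1 (by norm_num)).pow n

lemma W_natDegree (n : ℕ) : (((X:ℝ[X])^2 - 1)^n).natDegree = 2*n := by
  have h : ((X:ℝ[X])^2 - 1) = X^2 - C 1 := by rw [Polynomial.C_1]
  rw [h, Monic.natDegree_pow (Polynomial.monic_X_pow_sub_C 1 (by norm_num)),
    Polynomial.natDegree_X_pow_sub_C]
  ring

lemma two_n_choose (n : ℕ) : ((2*n).choose n : ℝ) * n.factorial * n.factorial = (2*n).factorial := by
  have h1 : (2*n).choose n * n.factorial * n.factorial = (2*n).factorial := by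
    have := Nat.choose_mul_factorial_mul_factorial (show n ≤ 2*n by omega)
    simpa [show 2*n - n = n by omega] using this
  exact_mod_cast h1

lemma leg_coeff (n : ℕ) : (Leg n).coeff n = ((2*n).factorial : ℝ) / (2^n * (n.factorial)^2) := by
  rw [Leg, Polynomial.coeff_C_mul, Polynomial.coeff_iterate_derivative]
  have hc : (((X:ℝ[X])^2-1)^n).coeff (n + n) = 1 := by
    have h := (W_monic n).leadingCoeff
    rwa [Polynomial.leadingCoeff, W_natDegree, two_mul] at h
  rw [hc, nsmul_eq_mul, mul_one, show n + n = 2*n by ring,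
    Nat.descFactorial_eq_factorial_mul_choose]
  have hf : (n.factorial:ℝ) ≠ 0 := Nat.cast_ne_zero.mpr n.factorial_ne_zero
  have h2 : (2:ℝ)^n ≠ 0 := by positivity
  push_cast
  field_simp
  linear_combination two_n_choose n

lemma leg_coeff_pos (n : ℕ) : 0 < (Leg n).coeff n := by
  rw [leg_coeff]
  have : (0:ℝ) < (2*n).factorial := by exact_mod_cast (2*n).factorial_pos
  positivity

lemma leg_natDegree (n : ℕ) : (Leg n).natDegree = n := by
  refine le_antisymm ?_ (Polynomial.le_natDegree_of_ne_zero (leg_coeff_pos n).ne')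
  refine (Polynomial.natDegree_C_mul_le _ _).trans ?_
  refine (Polynomial.natDegree_iterate_derivative _ _).trans ?_
  rw [W_natDegree]; omega

lemma D2n_W (n : ℕ) : Polynomial.derivative^[2*n] (((X:ℝ[X])^2 - 1)^n) = C ((2*n).factorial : ℝ) := by
  have hd : (Polynomial.derivative^[2*n] (((X:ℝ[X])^2 - 1)^n)).natDegree = 0 := by
    refine Nat.le_zero.mp ?_
    refine (Polynomial.natDegree_iterate_derivative _ _).trans ?_
    rw [W_natDegree]; omega
  rw [Polynomial.eq_C_of_natDegree_le_zero hd.le]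
  congr 1
  rw [Polynomial.coeff_iterate_derivative]
  have hc : (((X:ℝ[X])^2-1)^n).coeff (0 + 2*n) = 1 := by
    have h := (W_monic n).leadingCoeff
    rwa [Polynomial.leadingCoeff, W_natDegree, ← zero_add (2*n)] at h
  rw [hc]
  simp [Nat.descFactorial_self]

lemma Dn_leg (n : ℕ) : Polynomial.derivative^[n] (Leg n) =
    C (((2*n).factorial : ℝ) / (2^n * n.factorial)) := by
  rw [Leg, Polynomial.iterate_derivative_C_mul, ← Function.iterate_add_apply,
    show n + n = 2*n by ring, D2n_W, ← Polynomial.C_mul]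
  congr 1
  have hf : (n.factorial:ℝ) ≠ 0 := Nat.cast_ne_zero.mpr n.factorial_ne_zero
  field_simp

lemma DcompNeg (q : ℝ[X]) (m : ℕ) :
    Polynomial.derivative^[m] (q.comp (-X)) = (-1)^m * ((Polynomial.derivative^[m] q).comp (-X)) := by
  induction m with
  | zero => simp
  | succ m ih =>
    rw [Function.iterate_succ_apply', ih, Polynomial.derivative_mul, Polynomial.derivative_comp]
    have h0 : Polynomial.derivative ((-1:ℝ[X])^m) = 0 := by
      rw [← Polynomial.C_1, ← Polynomial.C_neg, ← Polynomial.C_pow, Polynomial.derivative_C]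
    rw [h0, zero_mul, zero_add]
    have h1 : Polynomial.derivative (-X : ℝ[X]) = -1 := by simp
    have h2 : Polynomial.derivative^[m+1] q = Polynomial.derivative (Polynomial.derivative^[m] q) :=
      Function.iterate_succ_apply' _ _ _
    rw [h1, h2]
    ring

lemma W_comp_neg (n : ℕ) : ((((X:ℝ[X])^2 - 1)^n).comp (-X)) = ((X:ℝ[X])^2 - 1)^n := by
  simp [Polynomial.pow_comp, Polynomial.sub_comp, Polynomial.X_comp, Polynomial.one_comp]

lemma leg_eval_neg (n : ℕ) (t : ℝ) : (Leg n).eval (-t) = (-1)^n * (Leg n).eval t := by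
  have h := DcompNeg (((X:ℝ[X])^2 - 1)^n) n
  rw [W_comp_neg] at h
  have he := congrArg (Polynomial.eval (-t)) h
  rw [Polynomial.eval_mul, Polynomial.eval_comp] at he
  simp only [Polynomial.eval_pow, Polynomial.eval_neg, Polynomial.eval_X, Polynomial.eval_one,
    neg_neg] at he
  rw [Leg]
  simp only [Polynomial.eval_mul, Polynomial.eval_C]
  rw [he]
  ring



lemma poly_cont (A : ℝ[X]) : Continuous fun x : ℝ => A.eval x := A.continuous_aeval

lemma poly_ftc (P : ℝ[X]) (a b : ℝ) :
    ∫ x in a..b, (Polynomial.derivative P).eval x = P.eval b - P.eval a :=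
  integral_eq_sub_of_hasDerivAt (fun x _ => P.hasDerivAt x)
    ((poly_cont _).intervalIntegrable a b)

lemma poly_ibp (A B : ℝ[X]) (h1 : A.eval 1 = 0) (h2 : A.eval (-1) = 0) :
    ∫ x in (-1:ℝ)..1, (Polynomial.derivative A).eval x * B.eval x =
      - ∫ x in (-1:ℝ)..1, A.eval x * (Polynomial.derivative B).eval x := by
  have h := poly_ftc (A * B) (-1) 1
  rw [Polynomial.derivative_mul, Polynomial.eval_mul, Polynomial.eval_mul, h1, h2,
    zero_mul, zero_mul, sub_zero] at h
  have e : (fun x:ℝ => (Polynomial.derivative A * B + A * Polynomial.derivative B).eval x)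
      = fun x:ℝ => (Polynomial.derivative A).eval x * B.eval x
        + A.eval x * (Polynomial.derivative B).eval x := by
    funext x; simp [Polynomial.eval_add, Polynomial.eval_mul]
  rw [e, integral_add (f := fun x => (Polynomial.derivative A).eval x * B.eval x)
    (g := fun x => A.eval x * (Polynomial.derivative B).eval x) (((poly_cont _).mul (poly_cont _)).intervalIntegrable _ _)
    (((poly_cont _).mul (poly_cont _)).intervalIntegrable _ _)] at h
  linarith

lemma W_dvd (n : ℕ) : ∀ j ≤ n, ∃ R : ℝ[X],
    Polynomial.derivative^[j] (((X:ℝ[X])^2-1)^n) = ((X:ℝ[X])^2-1)^(n-j) * R := by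
  intro j
  induction j with
  | zero => exact fun _ => ⟨1, by simp⟩
  | succ j ih =>
    intro hj
    obtain ⟨R, hR⟩ := ih (by omega)
    refine ⟨Polynomial.C ((n:ℝ)-j) * Polynomial.derivative ((X:ℝ[X])^2-1) * R
      + ((X:ℝ[X])^2-1) * Polynomial.derivative R, ?_⟩
    rw [Function.iterate_succ_apply', hR, Polynomial.derivative_mul, Polynomial.derivative_pow]
    have hnj : n - j = (n - (j+1)) + 1 := by omega
    have hc : ((n:ℝ) - j) = ((n - j : ℕ) : ℝ) := by
      have : j ≤ n := by omega
      push_cast [this]; ring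
    rw [hnj] at *
    push_cast [hc]
    ring
  
lemma W_vanish (n : ℕ) {j : ℕ} (hj : j < n) {x : ℝ} (hx : x^2 = 1) :
    (Polynomial.derivative^[j] (((X:ℝ[X])^2-1)^n)).eval x = 0 := by
  obtain ⟨R, hR⟩ := W_dvd n j hj.le
  rw [hR, Polynomial.eval_mul, Polynomial.eval_pow]
  have h0 : ((X:ℝ[X])^2-1).eval x = 0 := by simp [hx]
  rw [h0, zero_pow (by omega), zero_mul]

lemma iter_ibp : ∀ (n : ℕ) (W q : ℝ[X]),
    (∀ j < n, (Polynomial.derivative^[j] W).eval 1 = 0 ∧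
      (Polynomial.derivative^[j] W).eval (-1) = 0) →
    ∫ x in (-1:ℝ)..1, (Polynomial.derivative^[n] W).eval x * q.eval x
      = (-1)^n * ∫ x in (-1:ℝ)..1, W.eval x * (Polynomial.derivative^[n] q).eval x := by
  intro n
  induction n with
  | zero => intro W q _; simp
  | succ n ih =>
    intro W q hW
    have h1 : ∫ x in (-1:ℝ)..1, (Polynomial.derivative^[n+1] W).eval x * q.eval x
        = (-1)^n * ∫ x in (-1:ℝ)..1,
            (Polynomial.derivative W).eval x * (Polynomial.derivative^[n] q).eval x := by
      have hiter := ih (Polynomial.derivative W) q (fun j hj => by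
        have h2 := hW (j+1) (by omega)
        have e2 : Polynomial.derivative^[j+1] W
            = Polynomial.derivative^[j] (Polynomial.derivative W) :=
          Function.iterate_succ_apply _ _ _
        rwa [e2] at h2)
      have e : Polynomial.derivative^[n+1] W
          = Polynomial.derivative^[n] (Polynomial.derivative W) :=
        Function.iterate_succ_apply _ _ _
      rw [e]
      exact hiter
    rw [h1, poly_ibp W (Polynomial.derivative^[n] q) (hW 0 (by omega)).1 (hW 0 (by omega)).2]
    have h2 : Polynomial.derivative^[n+1] q
        = Polynomial.derivative (Polynomial.derivative^[n] q) := Function.iterate_succ_apply' _ _ _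
    rw [h2]
    ring

lemma W_hv (n : ℕ) : ∀ j < n, (Polynomial.derivative^[j] (((X:ℝ[X])^2-1)^n)).eval 1 = 0 ∧
    (Polynomial.derivative^[j] (((X:ℝ[X])^2-1)^n)).eval (-1) = 0 :=
  fun _ hj => ⟨W_vanish n hj (by norm_num), W_vanish n hj (by norm_num)⟩

lemma I_val : ∀ n : ℕ, ∫ x in (-1:ℝ)..1, (x^2-1)^n
    = (-1)^n * (2^(2*n+1) * ((n.factorial:ℝ))^2 / ((2*n+1).factorial)) := by
  intro n
  induction n with
  | zero => simp; norm_num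
  | succ n ih =>
    have hftc := poly_ftc (X * ((X:ℝ[X])^2-1)^(n+1)) (-1) 1
    have hz : (X * ((X:ℝ[X])^2-1)^(n+1)).eval 1 - (X * ((X:ℝ[X])^2-1)^(n+1)).eval (-1) = 0 := by
      simp
    rw [hz] at hftc
    have hder : (fun x:ℝ => (Polynomial.derivative (X * ((X:ℝ[X])^2-1)^(n+1))).eval x)
        = fun x:ℝ => (2*(n:ℝ)+3)*((x^2-1)^(n+1)) + (2*(n:ℝ)+2)*((x^2-1)^n) := by
      funext x
      simp only [Polynomial.derivative_mul, Polynomial.derivative_X, Polynomial.derivative_pow,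
        Polynomial.derivative_one, Polynomial.eval_add, Polynomial.eval_mul, Polynomial.eval_pow,
        Polynomial.eval_sub, Polynomial.eval_one, Polynomial.eval_X, Polynomial.eval_C,
        Polynomial.derivative_sub, Polynomial.derivative_X_pow, one_mul,
        Polynomial.eval_zero, mul_zero, zero_mul,
        Nat.add_sub_cancel]
      push_cast
      ring
    rw [hder] at hftc
    have hc1 : Continuous fun x:ℝ => (x^2-1)^(n+1) := by continuity
    have hc2 : Continuous fun x:ℝ => (x^2-1)^n := by continuity
    rw [integral_add (f := fun x => (2*(n:ℝ)+3)*((x^2-1)^(n+1)))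
        (g := fun x => (2*(n:ℝ)+2)*((x^2-1)^n)) ((continuous_const.mul hc1).intervalIntegrable _ _)
        ((continuous_const.mul hc2).intervalIntegrable _ _),
      integral_const_mul, integral_const_mul] at hftc
    rw [ih] at hftc
    have hrec : (2*(n:ℝ)+3) * (∫ x in (-1:ℝ)..1, (x^2-1)^(n+1))
        = -(2*(n:ℝ)+2) * ((-1)^n * (2^(2*n+1) * ((n.factorial:ℝ))^2 / ((2*n+1).factorial))) := by
      linarith
    have h23 : (2*(n:ℝ)+3) ≠ 0 := by positivity
    have hfacts : ((2*(n+1)+1).factorial : ℝ) = (2*(n:ℝ)+3) * (2*(n:ℝ)+2) * ((2*n+1).factorial) := by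
      have : 2*(n+1)+1 = (2*n+1) + 1 + 1 := by omega
      rw [this, Nat.factorial_succ, Nat.factorial_succ]
      push_cast
      ring
    have hfpos : ((2*n+1).factorial : ℝ) > 0 := by exact_mod_cast (2*n+1).factorial_pos
    apply mul_left_cancel₀ h23
    rw [hrec, hfacts]
    rw [show (n+1).factorial = (n+1) * n.factorial from Nat.factorial_succ n]
    push_cast
    field_simp
    ring

lemma leg_eval_eq (n : ℕ) (x : ℝ) : (Leg n).eval x =
    ((2:ℝ)^n * n.factorial)⁻¹ * (Polynomial.derivative^[n] (((X:ℝ[X])^2-1)^n)).eval x := by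
  rw [Leg]; simp

lemma leg_ortho_lower (n : ℕ) (q : ℝ[X]) (hq : q.natDegree < n) :
    ∫ x in (-1:ℝ)..1, (Leg n).eval x * q.eval x = 0 := by
  have h := iter_ibp n (((X:ℝ[X])^2-1)^n) q (W_hv n)
  rw [Polynomial.iterate_derivative_eq_zero hq] at h
  simp only [Polynomial.eval_zero, mul_zero, integral_zero, mul_zero] at h
  have e : (fun x:ℝ => (Leg n).eval x * q.eval x)
      = fun x:ℝ => ((2:ℝ)^n * n.factorial)⁻¹ *
          ((Polynomial.derivative^[n] (((X:ℝ[X])^2-1)^n)).eval x * q.eval x) := by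
    funext x; rw [Leg]; simp [Polynomial.eval_mul]; ring
  rw [e, integral_const_mul, h, mul_zero]

lemma leg_ortho {j k : ℕ} (hjk : j ≠ k) :
    ∫ x in (-1:ℝ)..1, (Leg j).eval x * (Leg k).eval x = 0 := by
  rcases Nat.lt_or_ge j k with h | h
  · have := leg_ortho_lower k (Leg j) (by rw [leg_natDegree]; exact h)
    rw [← this]
    refine integral_congr fun x _ => mul_comm _ _
  · exact leg_ortho_lower j (Leg k) (by rw [leg_natDegree]; omega)

lemma leg_norm (n : ℕ) :
    ∫ x in (-1:ℝ)..1, (Leg n).eval x * (Leg n).eval x = 2 / (2*(n:ℝ)+1) := by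
  have h := iter_ibp n (((X:ℝ[X])^2-1)^n) (Leg n) (W_hv n)
  rw [Dn_leg] at h
  have e1 : (fun x:ℝ => (((X:ℝ[X])^2-1)^n).eval x *
      (Polynomial.C (((2*n).factorial : ℝ) / (2^n * n.factorial))).eval x)
      = fun x:ℝ => (((2*n).factorial : ℝ) / (2^n * n.factorial)) * ((x^2-1)^n) := by
    funext x; simp [Polynomial.eval_pow]; ring
  rw [e1, integral_const_mul, I_val] at h
  have e2 : (fun x:ℝ => (Leg n).eval x * (Leg n).eval x)
      = fun x:ℝ => ((2:ℝ)^n * n.factorial)⁻¹ *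
          ((Polynomial.derivative^[n] (((X:ℝ[X])^2-1)^n)).eval x * (Leg n).eval x) := by
    funext x
    rw [leg_eval_eq]
    ring
  rw [e2, integral_const_mul, h]
  have hf : (n.factorial:ℝ) ≠ 0 := Nat.cast_ne_zero.mpr n.factorial_ne_zero
  have hfp : (0:ℝ) < (2*n+1).factorial := by exact_mod_cast (2*n+1).factorial_pos
  have hodd : ((2*n+1).factorial : ℝ) = (2*(n:ℝ)+1) * (2*n).factorial := by
    rw [Nat.factorial_succ]; push_cast; ring
  have h21 : (2*(n:ℝ)+1) ≠ 0 := by positivity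
  have h2n : ((2*n).factorial : ℝ) ≠ 0 := by
    have : (0:ℝ) < (2*n).factorial := by exact_mod_cast (2*n).factorial_pos
    exact this.ne'
  rw [hodd]
  have hm : ((-1:ℝ))^n * (-1:ℝ)^n = 1 := by
    rw [← pow_add, ← two_mul]; exact Even.neg_one_pow (even_two_mul n)
  field_simp
  linear_combination ((2:ℝ)^(2*n+1)) * hm

lemma leg_zero : Leg 0 = 1 := by
  rw [Leg]; simp

lemma exists_rep : ∀ (p : ℕ) (g : ℝ[X]), g.natDegree ≤ p →
    ∃ c : ℕ → ℝ, g = ∑ k ∈ range (p+1), Polynomial.C (c k) * Leg k := by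
  intro p
  induction p with
  | zero =>
    intro g hg
    refine ⟨fun _ => g.coeff 0, ?_⟩
    rw [Finset.sum_range_one, leg_zero, mul_one]
    exact Polynomial.eq_C_of_natDegree_le_zero hg
  | succ p ih =>
    intro g hg
    set c0 := g.coeff (p+1) / (Leg (p+1)).coeff (p+1) with hc0
    set d := g - Polynomial.C c0 * Leg (p+1) with hd
    have hdc : d.coeff (p+1) = 0 := by
      rw [hd, Polynomial.coeff_sub, Polynomial.coeff_C_mul, hc0,
        div_mul_cancel₀ _ (leg_coeff_pos (p+1)).ne', sub_self]
    have hdeg : d.natDegree ≤ p := by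
      by_cases h0 : d = 0
      · simp [h0]
      have hle : d.natDegree ≤ p+1 := by
        refine le_trans (Polynomial.natDegree_sub_le _ _) ?_
        refine max_le hg ?_
        refine le_trans (Polynomial.natDegree_C_mul_le _ _) ?_
        rw [leg_natDegree]
      have hne : d.natDegree ≠ p+1 := fun hEq => (Polynomial.leadingCoeff_ne_zero.mpr h0)
        (by rw [Polynomial.leadingCoeff, hEq]; exact hdc)
      omega
    obtain ⟨c, hc⟩ := ih d hdeg
    refine ⟨Function.update c (p+1) c0, ?_⟩
    rw [Finset.sum_range_succ, Function.update_self]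
    have hre : ∑ k ∈ range (p+1), Polynomial.C (Function.update c (p+1) c0 k) * Leg k
        = ∑ k ∈ range (p+1), Polynomial.C (c k) * Leg k := by
      refine Finset.sum_congr rfl fun k hk => ?_
      have hne : k ≠ p+1 := by have := Finset.mem_range.mp hk; omega
      rw [Function.update_of_ne hne]
    rw [hre, ← hc, hd]
    ring

lemma parseval (p : ℕ) (c : ℕ → ℝ) :
    ∫ x in (-1:ℝ)..1, (∑ k ∈ range (p+1), Polynomial.C (c k) * Leg k).eval x ^ 2
      = ∑ k ∈ range (p+1), (c k)^2 * (2 / (2*(k:ℝ)+1)) := by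
  have e : (fun x:ℝ => (∑ k ∈ range (p+1), Polynomial.C (c k) * Leg k).eval x ^2)
      = fun x => ∑ k ∈ range (p+1), ∑ j ∈ range (p+1),
          (c k * c j) * ((Leg k).eval x * (Leg j).eval x) := by
    funext x
    rw [Polynomial.eval_finset_sum, sq, Finset.sum_mul_sum]
    refine Finset.sum_congr rfl fun k _ => Finset.sum_congr rfl fun j _ => ?_
    simp only [Polynomial.eval_mul, Polynomial.eval_C]
    ring
  rw [e]
  have int1 : ∀ k ∈ range (p+1), IntervalIntegrable
      (fun x => ∑ j ∈ range (p+1), (c k * c j) * ((Leg k).eval x * (Leg j).eval x))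
      MeasureTheory.volume (-1:ℝ) 1 := by
    intro k _
    refine Continuous.intervalIntegrable ?_ _ _
    exact continuous_finset_sum _ fun j _ => continuous_const.mul ((poly_cont _).mul (poly_cont _))
  rw [integral_finset_sum int1]
  refine Finset.sum_congr rfl fun k hk => ?_
  have int2 : ∀ j ∈ range (p+1), IntervalIntegrable
      (fun x => (c k * c j) * ((Leg k).eval x * (Leg j).eval x))
      MeasureTheory.volume (-1:ℝ) 1 := fun j _ =>
    (continuous_const.mul ((poly_cont _).mul (poly_cont _))).intervalIntegrable _ _
  rw [integral_finset_sum int2]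
  rw [Finset.sum_eq_single k]
  · rw [integral_const_mul, leg_norm]
    ring
  · intro j _ hjk
    rw [integral_const_mul, leg_ortho (Ne.symm hjk), mul_zero]
  · intro hkk
    exact absurd hk hkk

lemma pointwise_bound (p : ℕ) (g : ℝ[X]) (hg : g.natDegree ≤ p) (t : ℝ) :
    (g.eval t)^2 ≤ (∫ x in (-1:ℝ)..1, (g.eval x)^2) *
      (∑ k ∈ range (p+1), (2*(k:ℝ)+1)/2 * ((Leg k).eval t)^2) := by
  obtain ⟨c, hc⟩ := exists_rep p g hg
  have hN : ∫ x in (-1:ℝ)..1, (g.eval x)^2 = ∑ k ∈ range (p+1), (c k)^2 * (2 / (2*(k:ℝ)+1)) := by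
    rw [hc]; exact parseval p c
  have hgt : g.eval t = ∑ k ∈ range (p+1), c k * (Leg k).eval t := by
    rw [hc, Polynomial.eval_finset_sum]
    exact Finset.sum_congr rfl fun k _ => by simp
  rw [hN, hgt]
  have key : ∀ k : ℕ, c k * (Leg k).eval t
      = (c k * Real.sqrt (2/(2*(k:ℝ)+1))) * (Real.sqrt ((2*(k:ℝ)+1)/2) * (Leg k).eval t) := by
    intro k
    have h1 : (0:ℝ) < 2/(2*(k:ℝ)+1) := by positivity
    have h2 : Real.sqrt (2/(2*(k:ℝ)+1)) * Real.sqrt ((2*(k:ℝ)+1)/2) = 1 := by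
      rw [← Real.sqrt_mul h1.le]
      rw [show (2/(2*(k:ℝ)+1)) * ((2*(k:ℝ)+1)/2) = 1 by field_simp]
      exact Real.sqrt_one
    calc c k * (Leg k).eval t = (Real.sqrt (2/(2*(k:ℝ)+1)) * Real.sqrt ((2*(k:ℝ)+1)/2)) *
          (c k * (Leg k).eval t) := by rw [h2]; ring
      _ = _ := by ring
  calc (∑ k ∈ range (p+1), c k * (Leg k).eval t)^2
      = (∑ k ∈ range (p+1), (c k * Real.sqrt (2/(2*(k:ℝ)+1))) *
          (Real.sqrt ((2*(k:ℝ)+1)/2) * (Leg k).eval t))^2 := by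
        rw [Finset.sum_congr rfl fun k _ => key k]
    _ ≤ (∑ k ∈ range (p+1), (c k * Real.sqrt (2/(2*(k:ℝ)+1)))^2) *
          (∑ k ∈ range (p+1), (Real.sqrt ((2*(k:ℝ)+1)/2) * (Leg k).eval t)^2) :=
        Finset.sum_mul_sq_le_sq_mul_sq _ _ _
    _ = (∑ k ∈ range (p+1), (c k)^2 * (2 / (2*(k:ℝ)+1))) *
          (∑ k ∈ range (p+1), (2*(k:ℝ)+1)/2 * ((Leg k).eval t)^2) := by
        congr 1
        · refine Finset.sum_congr rfl fun k _ => ?_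
          rw [mul_pow, Real.sq_sqrt (by positivity)]
        · refine Finset.sum_congr rfl fun k _ => ?_
          rw [mul_pow, Real.sq_sqrt (by positivity)]

lemma leg_nonneg {n : ℕ} {t : ℝ} (ht : 1 ≤ t) : 0 ≤ (Leg n).eval t := by
  rw [leg_eval]
  refine Finset.sum_nonneg fun k _ => ?_
  have h1 : (0:ℝ) ≤ (t-1)/2 := by linarith
  have h2 : (0:ℝ) ≤ (t+1)/2 := by linarith
  positivity

lemma choose_sq_le {n k : ℕ} (_ : k ≤ n) : (n.choose k)^2 ≤ (2*n).choose (2*k) := by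
  rw [two_mul n, Nat.add_choose_eq n n (2*k)]
  have hmem : ((k, k) : ℕ × ℕ) ∈ Finset.HasAntidiagonal.antidiagonal (2*k) := by
    simp [two_mul]
  calc (n.choose k)^2 = n.choose k * n.choose k := sq (n.choose k) ▸ rfl
    _ ≤ _ := Finset.single_le_sum (f := fun ij => n.choose ij.1 * n.choose ij.2)
        (fun i _ => Nat.zero_le _) hmem

lemma leg_le {n : ℕ} {t : ℝ} (ht : 1 ≤ t) :
    (Leg n).eval t ≤ (t + Real.sqrt (t^2 - 1))^n := by
  set a : ℝ := (t-1)/2 with ha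
  set b : ℝ := (t+1)/2 with hb
  have ha0 : 0 ≤ a := by rw [ha]; linarith
  have hb0 : 0 ≤ b := by rw [hb]; linarith
  set sa := Real.sqrt a
  set sb := Real.sqrt b
  have hsa : sa^2 = a := Real.sq_sqrt ha0
  have hsb : sb^2 = b := Real.sq_sqrt hb0
  have hsa0 : 0 ≤ sa := Real.sqrt_nonneg _
  have hsb0 : 0 ≤ sb := Real.sqrt_nonneg _
  have key : (t + Real.sqrt (t^2-1))^n = ((sa + sb)^2)^n := by
    congr 1
    have hab : a * b = (t^2-1)/4 := by rw [ha, hb]; ring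
    have : sa * sb = Real.sqrt (t^2-1) / 2 := by
      rw [← Real.sqrt_mul ha0, hab]
      rw [show (t^2-1)/4 = (t^2-1) * (1/2)^2 by ring, Real.sqrt_mul (by nlinarith)]
      rw [Real.sqrt_sq (by norm_num)]
      ring
    have hsum : a + b = t := by rw [ha, hb]; ring
    nlinarith [this, hsa, hsb]
  rw [key, ← pow_mul, leg_eval]
  have expand : (sa + sb)^(2*n) = ∑ m ∈ range (2*n+1), (sa^m * sb^(2*n - m)) * ((2*n).choose m : ℝ) := by
    rw [add_pow]
  rw [expand]
  have step1 : ∑ k ∈ range (n+1), (n.choose k : ℝ)^2 * (a^k * b^(n-k)) ≤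
      ∑ k ∈ range (n+1), ((2*n).choose (2*k) : ℝ) * (a^k * b^(n-k)) := by
    refine Finset.sum_le_sum fun k hk => ?_
    have hk' : k ≤ n := Nat.lt_succ_iff.mp (Finset.mem_range.mp hk)
    have hc : ((n.choose k : ℝ))^2 ≤ ((2*n).choose (2*k) : ℝ) := by
      exact_mod_cast choose_sq_le hk'
    have : (0:ℝ) ≤ a^k * b^(n-k) := by positivity
    nlinarith
  refine step1.trans ?_
  have reindex : ∑ k ∈ range (n+1), ((2*n).choose (2*k) : ℝ) * (a^k * b^(n-k)) =
      ∑ m ∈ (range (n+1)).image (fun k => 2*k), (sa^m * sb^(2*n - m)) * ((2*n).choose m : ℝ) := by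
    rw [Finset.sum_image (by intro x _ y _ h; simp only at h; omega)]
    refine Finset.sum_congr rfl fun k hk => ?_
    have hk' : k ≤ n := Nat.lt_succ_iff.mp (Finset.mem_range.mp hk)
    have e1 : sa^(2*k) = a^k := by rw [pow_mul, hsa]
    have e2 : sb^(2*n - 2*k) = b^(n-k) := by
      rw [show 2*n - 2*k = 2*(n-k) by omega, pow_mul, hsb]
    rw [e1, e2]; ring
  rw [reindex]
  refine Finset.sum_le_sum_of_subset_of_nonneg ?_ (fun m _ _ => by positivity)
  intro m hm
  simp only [Finset.mem_image, Finset.mem_range] at hm ⊢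
  omega

noncomputable def sfun (t : ℝ) : ℝ := t + Real.sqrt (t^2 - 1)

lemma sfun_cont : Continuous sfun := by
  unfold sfun
  exact continuous_id.add (Real.continuous_sqrt.comp ((continuous_pow 2).sub continuous_const))

lemma sfun_one : sfun 1 = 1 := by unfold sfun; norm_num

lemma sfun_ge {t : ℝ} (ht : 1 ≤ t) : 1 ≤ sfun t := by
  unfold sfun
  have := Real.sqrt_nonneg (t^2-1)
  linarith

lemma sfun_hasDeriv {t : ℝ} (ht : 1 < t) :
    HasDerivAt sfun (1 + t / Real.sqrt (t^2-1)) t := by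
  have hpos : 0 < t^2 - 1 := by nlinarith
  have h1 : HasDerivAt (fun x : ℝ => x^2 - 1) (2*t) t := by
    simpa using ((hasDerivAt_pow 2 t).sub_const 1)
  have h2 : HasDerivAt (fun x : ℝ => Real.sqrt (x^2-1)) (1/(2*Real.sqrt (t^2-1)) * (2*t)) t :=
    (Real.hasDerivAt_sqrt hpos.ne').comp t h1
  have h3 : 1/(2*Real.sqrt (t^2-1)) * (2*t) = t / Real.sqrt (t^2-1) := by
    have hs : 0 < Real.sqrt (t^2-1) := Real.sqrt_pos.mpr hpos
    field_simp
  rw [h3] at h2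
  exact (hasDerivAt_id t).add h2

lemma sfun_pow_integral (j : ℕ) (l : ℝ) (hl : 1 < l) :
    ∫ t in (1:ℝ)..l, (sfun t)^(2*(j+1)) =
      (((sfun l)^(2*j+3)/(2*(j:ℝ)+3) - (sfun l)^(2*j+1)/(2*(j:ℝ)+1))
        - (1/(2*(j:ℝ)+3) - 1/(2*(j:ℝ)+1)))/2 := by
  set F : ℝ → ℝ := fun t => ((sfun t)^(2*j+3)/(2*(j:ℝ)+3) - (sfun t)^(2*j+1)/(2*(j:ℝ)+1))/2 with hF
  have hcont : ContinuousOn F (Set.Icc 1 l) :=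
    ((((sfun_cont.pow _).div_const _).sub
      ((sfun_cont.pow _).div_const _)).div_const _).continuousOn
  have hderiv : ∀ t ∈ Set.Ioo (1:ℝ) l, HasDerivAt F ((sfun t)^(2*(j+1))) t := by
    intro t ht
    have ht1 : 1 < t := ht.1
    have hpos : 0 < t^2 - 1 := by nlinarith
    have h3 : (2*(j:ℝ)+3) ≠ 0 := by positivity
    have h4 : (2*(j:ℝ)+1) ≠ 0 := by positivity
    set u := Real.sqrt (t^2-1) with hu
    have hs : 0 < u := Real.sqrt_pos.mpr hpos
    have hsq : u^2 = t^2-1 := Real.sq_sqrt hpos.le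
    have hd := sfun_hasDeriv ht1
    have h1 : HasDerivAt (fun x => (sfun x)^(2*j+3))
        ((2*(j:ℝ)+3) * (sfun t)^(2*j+2) * (1 + t / u)) t := by
      have := hd.pow (2*j+3)
      have e : ((2*j+3 : ℕ) : ℝ) = 2*(j:ℝ)+3 := by push_cast; ring
      refine this.congr_deriv ?_
      rw [e, show 2*j+3-1 = 2*j+2 by omega, ← hu]
    have h2 : HasDerivAt (fun x => (sfun x)^(2*j+1))
        ((2*(j:ℝ)+1) * (sfun t)^(2*j) * (1 + t / u)) t := by
      have := hd.pow (2*j+1)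
      have e : ((2*j+1 : ℕ) : ℝ) = 2*(j:ℝ)+1 := by push_cast; ring
      refine this.congr_deriv ?_
      rw [e, show 2*j+1-1 = 2*j by omega, ← hu]
    have hcomb := ((h1.div_const (2*(j:ℝ)+3)).sub (h2.div_const (2*(j:ℝ)+1))).div_const 2
    refine hcomb.congr_deriv (Eq.symm ?_)
    rw [mul_assoc, mul_assoc, mul_div_cancel_left₀ _ h3, mul_div_cancel_left₀ _ h4]
    have hsfun : sfun t = t + u := rfl
    rw [hsfun]
    have hexp1 : (t + u) ^ (2*j+2) = (t + u)^(2*j) * (t + u)^2 := by rw [← pow_add]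
    have hexp2 : (t + u) ^ (2*(j+1)) = (t + u)^(2*j) * (t + u)^2 := by
      rw [show 2*(j+1) = 2*j+2 from by omega]; exact hexp1
    rw [hexp1, hexp2]
    field_simp
    linear_combination (t+u) * hsq
  have hint : IntervalIntegrable (fun t => (sfun t)^(2*(j+1))) MeasureTheory.volume 1 l :=
    ((sfun_cont.pow _).intervalIntegrable _ _)
  rw [integral_eq_sub_of_hasDerivAt_of_le hl.le hcont hderiv hint]
  rw [hF]
  simp only [sfun_one, one_pow]
  ring

lemma K_int_bound (p : ℕ) (l : ℝ) (hl : 1 < l) :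
    (∫ t in (1:ℝ)..l, (∑ k ∈ range (p+1), (2*(k:ℝ)+1)/2 * ((Leg k).eval t)^2))
      ≤ (1/4) * ((sfun l)^(2*p+1) - 1) := by
  set U := sfun l with hU
  have hUl : l ≤ U := le_add_of_nonneg_right (Real.sqrt_nonneg _)
  have hU1 : 1 ≤ U := le_trans hl.le hUl
  have int_a : IntervalIntegrable
      (fun t => ∑ k ∈ range (p+1), (2*(k:ℝ)+1)/2 * ((Leg k).eval t)^2)
      MeasureTheory.volume 1 l :=
    (continuous_finset_sum _ fun k _ =>
      continuous_const.mul ((poly_cont _).pow 2)).intervalIntegrable _ _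
  have int_b : IntervalIntegrable
      (fun t => ∑ k ∈ range (p+1), (2*(k:ℝ)+1)/2 * (sfun t)^(2*k))
      MeasureTheory.volume 1 l :=
    (continuous_finset_sum _ fun k _ =>
      continuous_const.mul (sfun_cont.pow _)).intervalIntegrable _ _
  have mono1 : (∫ t in (1:ℝ)..l, (∑ k ∈ range (p+1), (2*(k:ℝ)+1)/2 * ((Leg k).eval t)^2))
      ≤ ∫ t in (1:ℝ)..l, (∑ k ∈ range (p+1), (2*(k:ℝ)+1)/2 * (sfun t)^(2*k)) := by
    refine integral_mono_on hl.le int_a int_b ?_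
    intro t ht
    refine Finset.sum_le_sum fun k _ => ?_
    have ht1 : 1 ≤ t := ht.1
    have hsq : ((Leg k).eval t)^2 ≤ (sfun t)^(2*k) := by
      have h := pow_le_pow_left₀ (leg_nonneg (n:=k) ht1) (leg_le (n:=k) ht1) 2
      rwa [← pow_mul, mul_comm k 2] at h
    have hc : (0:ℝ) ≤ (2*(k:ℝ)+1)/2 := by positivity
    exact mul_le_mul_of_nonneg_left hsq hc
  have swap : (∫ t in (1:ℝ)..l, (∑ k ∈ range (p+1), (2*(k:ℝ)+1)/2 * (sfun t)^(2*k)))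
      = ∑ k ∈ range (p+1), (2*(k:ℝ)+1)/2 * ∫ t in (1:ℝ)..l, (sfun t)^(2*k) := by
    rw [integral_finset_sum (f := fun (k : ℕ) t => (2*(k:ℝ)+1)/2 * (sfun t)^(2*k)) (fun k _ =>
      ((continuous_const.mul (sfun_cont.pow _)).intervalIntegrable _ _))]
    exact Finset.sum_congr rfl fun k _ => integral_const_mul _ _
  refine mono1.trans ?_
  rw [swap, Finset.sum_range_succ']
  have f0 : (2*((0:ℕ):ℝ)+1)/2 * (∫ t in (1:ℝ)..l, (sfun t)^(2*0)) = (l-1)/2 := by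
    norm_num
    ring
  have fj : ∀ j ∈ range p, (2*((j+1:ℕ):ℝ)+1)/2 * (∫ t in (1:ℝ)..l, (sfun t)^(2*(j+1)))
      ≤ (1/4) * (U^(2*(j+1)+1) - U^(2*j+1)) := by
    intro j _
    rw [sfun_pow_integral j l hl, show 2*(j+1)+1 = 2*j+3 from by omega]
    have h3 : (0:ℝ) < 2*(j:ℝ)+1 := by positivity
    have h5 : (0:ℝ) < 2*(j:ℝ)+3 := by positivity
    have hB : 1 ≤ U^(2*j+1) := by simpa using pow_le_pow_left₀ (by norm_num : (0:ℝ) ≤ 1) hU1 (2*j+1)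
    have hkey : (2*((j+1:ℕ):ℝ)+1)/2 *
        (((U^(2*j+3)/(2*(j:ℝ)+3) - U^(2*j+1)/(2*(j:ℝ)+1))
          - (1/(2*(j:ℝ)+3) - 1/(2*(j:ℝ)+1)))/2)
        = (1/4) * (U^(2*j+3) - U^(2*j+1)) - (U^(2*j+1) - 1)/(2*(2*(j:ℝ)+1)) := by
      push_cast
      field_simp
      ring
    rw [hkey]
    have : (0:ℝ) ≤ (U^(2*j+1) - 1)/(2*(2*(j:ℝ)+1)) := by
      apply div_nonneg (by linarith) (by linarith)
    linarith
  have tele : ∑ j ∈ range p, (1/4) * (U^(2*(j+1)+1) - U^(2*j+1))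
      = (1/4) * (U^(2*p+1) - U^1) := by
    have := Finset.sum_range_sub (fun i => (1/4) * U^(2*i+1)) p
    simpa [mul_sub] using this
  have sum_le : ∑ j ∈ range p, (2*((j+1:ℕ):ℝ)+1)/2 * (∫ t in (1:ℝ)..l, (sfun t)^(2*(j+1)))
      ≤ (1/4) * (U^(2*p+1) - U^1) := by
    rw [← tele]
    exact Finset.sum_le_sum fj
  have hsqrt : l - 1 ≤ Real.sqrt (l^2-1) := by
    have h1 : l - 1 = Real.sqrt ((l-1)^2) := (Real.sqrt_sq (by linarith)).symm
    rw [h1]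
    exact Real.sqrt_le_sqrt (by nlinarith)
  have hU2 : 2*(l-1) ≤ U - 1 := by
    have : U = l + Real.sqrt (l^2-1) := rfl
    rw [this]; linarith
  have := f0
  push_cast at this ⊢
  rw [this]
  have := sum_le
  push_cast at this
  rw [pow_one] at this
  linarith

/-- One-dimensional domain inverse estimate (Lemma 2.2): for `λ > 1` and any polynomial
`g` of degree at most `p`,
`∫_{(−λ,λ) \ [−1,1]} g² ≤ (1/2)[(λ + √(λ²−1))^{2p+1} − 1] ∫_{−1}^{1} g²`. -/
theorem domain_inverse_estimate_1d (p : ℕ) (l : ℝ) (hl : 1 < l)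
    (g : Polynomial ℝ) (hg : g.natDegree ≤ p) :
    (∫ t in Set.Ioo (-l) l \ Set.Icc (-1 : ℝ) 1, (g.eval t) ^ 2) ≤
      (1 / 2) * ((l + Real.sqrt (l ^ 2 - 1)) ^ (2 * p + 1) - 1) *
        ∫ t in (-1 : ℝ)..1, (g.eval t) ^ 2 := by
  set N := ∫ x in (-1:ℝ)..1, (g.eval x)^2 with hNdef
  have hN0 : 0 ≤ N := intervalIntegral.integral_nonneg (by norm_num)
    (fun u _ => sq_nonneg _)
  set K : ℝ → ℝ := fun t => ∑ k ∈ range (p+1), (2*(k:ℝ)+1)/2 * ((Leg k).eval t)^2 with hKdef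
  have Kcont : Continuous K :=
    continuous_finset_sum _ fun k _ => continuous_const.mul ((poly_cont _).pow 2)
  have Keven : ∀ t, K (-t) = K t := by
    intro t
    refine Finset.sum_congr rfl fun k _ => ?_
    rw [leg_eval_neg, mul_pow, ← pow_mul, mul_comm k 2, pow_mul]
    norm_num
  have gcont : Continuous fun t : ℝ => (g.eval t)^2 := (poly_cont g).pow 2
  have hset : Set.Ioo (-l) l \ Set.Icc (-1:ℝ) 1 = Set.Ioo (-l) (-1) ∪ Set.Ioo 1 l := by
    ext t
    simp only [Set.mem_diff, Set.mem_Ioo, Set.mem_Icc, Set.mem_union, not_and_or, not_le]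
    constructor
    · rintro ⟨⟨h1, h2⟩, h3 | h3⟩
      · exact Or.inl ⟨h1, h3⟩
      · exact Or.inr ⟨h3, h2⟩
    · rintro (⟨h1, h2⟩ | ⟨h1, h2⟩)
      · exact ⟨⟨h1, by linarith⟩, Or.inl h2⟩
      · exact ⟨⟨by linarith, h2⟩, Or.inr h1⟩
  have hdisj : Disjoint (Set.Ioo (-l) (-1)) (Set.Ioo (1:ℝ) l) := by
    refine Set.disjoint_left.mpr fun t ht1 ht2 => ?_
    simp only [Set.mem_Ioo] at ht1 ht2
    linarith [ht1.2, ht2.1]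
  have hint1 : MeasureTheory.IntegrableOn (fun t => (g.eval t)^2) (Set.Ioo (-l) (-1)) MeasureTheory.volume :=
    (gcont.integrableOn_Icc).mono_set Set.Ioo_subset_Icc_self
  have hint2 : MeasureTheory.IntegrableOn (fun t => (g.eval t)^2) (Set.Ioo (1:ℝ) l) MeasureTheory.volume :=
    (gcont.integrableOn_Icc).mono_set Set.Ioo_subset_Icc_self
  rw [hset, MeasureTheory.setIntegral_union hdisj measurableSet_Ioo hint1 hint2]
  have hIoo1 : ∫ t in Set.Ioo (-l) (-1), (g.eval t)^2 = ∫ t in (-l)..(-1), (g.eval t)^2 := by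
    rw [intervalIntegral.integral_of_le (by linarith), MeasureTheory.integral_Ioc_eq_integral_Ioo]
  have hIoo2 : ∫ t in Set.Ioo (1:ℝ) l, (g.eval t)^2 = ∫ t in (1:ℝ)..l, (g.eval t)^2 := by
    rw [intervalIntegral.integral_of_le (by linarith), MeasureTheory.integral_Ioc_eq_integral_Ioo]
  rw [hIoo1, hIoo2]
  have hb2 : ∫ t in (1:ℝ)..l, (g.eval t)^2 ≤ N * ∫ t in (1:ℝ)..l, K t := by
    rw [← integral_const_mul]
    refine integral_mono_on hl.le (gcont.intervalIntegrable _ _)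
      ((continuous_const.mul Kcont).intervalIntegrable _ _) ?_
    intro t _
    exact pointwise_bound p g hg t
  have hb1 : ∫ t in (-l)..(-1), (g.eval t)^2 ≤ N * ∫ t in (1:ℝ)..l, K t := by
    have hflip : ∫ t in (-l)..(-1), (g.eval t)^2 = ∫ t in (1:ℝ)..l, (g.eval (-t))^2 := by
      rw [intervalIntegral.integral_comp_neg (fun t => (g.eval t)^2)]
    rw [hflip, ← integral_const_mul]
    refine integral_mono_on hl.le ((gcont.comp continuous_neg).intervalIntegrable _ _)
      ((continuous_const.mul Kcont).intervalIntegrable _ _) ?_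
    intro t _
    calc (g.eval (-t))^2 ≤ N * K (-t) := pointwise_bound p g hg (-t)
      _ = N * K t := by rw [Keven]
  have hKb := K_int_bound p l hl
  have hNK : N * ∫ t in (1:ℝ)..l, K t ≤ N * ((1/4) * ((sfun l)^(2*p+1) - 1)) :=
    mul_le_mul_of_nonneg_left hKb hN0
  have hfin : (2:ℝ) * (N * ((1/4) * ((sfun l)^(2*p+1) - 1)))
      = (1/2) * ((l + Real.sqrt (l^2-1))^(2*p+1) - 1) * N := by
    have : sfun l = l + Real.sqrt (l^2-1) := rfl
    rw [this]; ring
  linarith
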